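/- Let φ : A → B be a *-homomorphism between C*-algebras A ⊆ B(H₁), B ⊆ B(H₂), let K be a Hilbert space with orthonormal basis {e_α}, and let S, T ∈ A ⊗_M B(K) with S ∈ R(A; K) (meaning E^z S ∈ A ⊗ bra(K), the norm closure of the algebraic row space, for all z ∈ K). Then S T ∈ A ⊗_M B(K) and (φ ⊗_M id)(S) (φ ⊗_M id)(T) = (φ ⊗_M id)(S T), where φ ⊗_M id denotes the matrix-space lifting determined by E^z (φ ⊗_M id)(X) E_w = φ(E^z X E_w). -/

import Mathlib

set_option linter.unusedSectionVars false
set_option maxHeartbeats 1000000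
set_option synthInstance.maxHeartbeats 400000

noncomputable section Stmt8Aux

open ContinuousLinearMap

local notation "⟪" x ", " y "⟫" => @inner ℂ _ _ x y

variable {H K HK : Type*}
  [NormedAddCommGroup H] [InnerProductSpace ℂ H] [CompleteSpace H]
  [NormedAddCommGroup K] [InnerProductSpace ℂ K] [CompleteSpace K]
  [NormedAddCommGroup HK] [InnerProductSpace ℂ HK] [CompleteSpace HK]

variable (tm : H →L[ℂ] K →L[ℂ] HK)

lemma stmt8_tm_norm (htm : ∀ (u v : H) (z w : K), ⟪tm u z, tm v w⟫ = ⟪u, v⟫ * ⟪z, w⟫)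
    (u : H) (x : K) : ‖tm u x‖ = ‖u‖ * ‖x‖ := by
  have h := htm u u x x
  rw [inner_self_eq_norm_sq_to_K, inner_self_eq_norm_sq_to_K,
    inner_self_eq_norm_sq_to_K] at h
  have h' : (‖tm u x‖ ^ 2 : ℝ) = (‖u‖ * ‖x‖) ^ 2 := by
    have : ((‖tm u x‖ ^ 2 : ℝ) : ℂ) = (((‖u‖ * ‖x‖) ^ 2 : ℝ) : ℂ) := by
      push_cast; rw [mul_pow]; exact h
    exact_mod_cast this
  nlinarith [norm_nonneg (tm u x), norm_nonneg u, norm_nonneg x,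
    mul_nonneg (norm_nonneg u) (norm_nonneg x)]

lemma stmt8_flip_norm (htm : ∀ (u v : H) (z w : K), ⟪tm u z, tm v w⟫ = ⟪u, v⟫ * ⟪z, w⟫)
    (x : K) : ‖tm.flip x‖ ≤ ‖x‖ := by
  refine opNorm_le_bound _ (norm_nonneg x) fun u => ?_
  rw [ContinuousLinearMap.flip_apply, stmt8_tm_norm tm htm]
  ring_nf; exact le_rfl

lemma stmt8_adj_flip_apply (htm : ∀ (u v : H) (z w : K), ⟪tm u z, tm v w⟫ = ⟪u, v⟫ * ⟪z, w⟫)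
    (z x : K) (u : H) :
    adjoint (tm.flip z) (tm u x) = (⟪z, x⟫ : ℂ) • u := by
  apply ext_inner_right ℂ
  intro v
  rw [adjoint_inner_left, inner_smul_left, ContinuousLinearMap.flip_apply,
    htm, inner_conj_symm]
  ring


open Filter Topology

variable {ι : Type*} (b : HilbertBasis ι ℂ K)

/-- Partial sum of the diagonal projections `E_{e_α} E^{e_α}`. -/
noncomputable def stmt8P (F : Finset ι) : HK →L[ℂ] HK :=
  ∑ α ∈ F, (tm.flip (b α)) ∘L adjoint (tm.flip (b α))

lemma stmt8P_apply (F : Finset ι) (ξ : HK) :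
    stmt8P tm b F ξ = ∑ α ∈ F, tm (adjoint (tm.flip (b α)) ξ) (b α) := by
  simp [stmt8P, ContinuousLinearMap.sum_apply]

lemma stmt8P_norm_apply_le
    (htm : ∀ (u v : H) (z w : K), ⟪tm u z, tm v w⟫ = ⟪u, v⟫ * ⟪z, w⟫)
    (F : Finset ι) (ξ : HK) : ‖stmt8P tm b F ξ‖ ≤ ‖ξ‖ := by
  classical
  set c : ι → H := fun α => adjoint (tm.flip (b α)) ξ with hc
  have hP : stmt8P tm b F ξ = ∑ α ∈ F, tm (c α) (b α) := stmt8P_apply tm b F ξ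
  have hL : ∀ α ∈ F, ⟪tm (c α) (b α), ∑ β ∈ F, tm (c β) (b β)⟫ = ⟪c α, c α⟫ := by
    intro α hα
    rw [inner_sum]
    have hterm : ∀ β ∈ F, ⟪tm (c α) (b α), tm (c β) (b β)⟫
        = if β = α then ⟪c α, c α⟫ else 0 := by
      intro β _
      rw [htm, orthonormal_iff_ite.mp b.orthonormal]
      rcases eq_or_ne α β with h | h
      · subst h; simp
      · simp [h, Ne.symm h]
    rw [Finset.sum_congr rfl hterm, Finset.sum_ite_eq' F α, if_pos hα]
  have hR : ∀ β ∈ F, ⟪ξ, tm (c β) (b β)⟫ = ⟪c β, c β⟫ := by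
    intro β _
    have : tm (c β) (b β) = (tm.flip (b β)) (c β) := rfl
    rw [this, ← adjoint_inner_left (tm.flip (b β)) (c β) ξ]
  have key : ⟪stmt8P tm b F ξ, stmt8P tm b F ξ⟫ = ⟪ξ, stmt8P tm b F ξ⟫ := by
    rw [hP, sum_inner, inner_sum, Finset.sum_congr rfl hL, Finset.sum_congr rfl hR]
  have h1 : (‖stmt8P tm b F ξ‖ : ℝ) ^ 2 = RCLike.re ⟪ξ, stmt8P tm b F ξ⟫ := by
    rw [← key, inner_self_eq_norm_sq]
  have h2 : RCLike.re (⟪ξ, stmt8P tm b F ξ⟫ : ℂ) ≤ ‖ξ‖ * ‖stmt8P tm b F ξ‖ := by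
    refine le_trans ?_ (norm_inner_le_norm (𝕜 := ℂ) ξ (stmt8P tm b F ξ))
    exact RCLike.re_le_norm _
  nlinarith [norm_nonneg (stmt8P tm b F ξ), norm_nonneg ξ]

lemma stmt8P_opNorm (htm : ∀ (u v : H) (z w : K), ⟪tm u z, tm v w⟫ = ⟪u, v⟫ * ⟪z, w⟫)
    (F : Finset ι) : ‖stmt8P tm b F‖ ≤ 1 :=
  opNorm_le_bound _ zero_le_one fun ξ => by
    rw [one_mul]; exact stmt8P_norm_apply_le tm b htm F ξ


lemma stmt8P_tendsto
    (htm : ∀ (u v : H) (z w : K), ⟪tm u z, tm v w⟫ = ⟪u, v⟫ * ⟪z, w⟫)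
    (htot : Dense ((Submodule.span ℂ
      (Set.range fun p : H × K => tm p.1 p.2) : Submodule ℂ HK) : Set HK))
    (ξ : HK) :
    Tendsto (fun F : Finset ι => stmt8P tm b F ξ) atTop (𝓝 ξ) := by
  have hgen : ∀ (u : H) (x : K),
      Tendsto (fun F : Finset ι => stmt8P tm b F (tm u x)) atTop (𝓝 (tm u x)) := by
    intro u x
    have hs : HasSum (fun α : ι => tm u (b.repr x α • b α)) (tm u x) :=
      (b.hasSum_repr x).mapL (tm u)
    have heq : (fun α : ι => tm u (b.repr x α • b α))
        = fun α => ((tm.flip (b α)) ∘L adjoint (tm.flip (b α))) (tm u x) := by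
      funext α
      rw [b.repr_apply_apply, map_smul]
      simp only [comp_apply, stmt8_adj_flip_apply tm htm (b α) x u]
      rw [ContinuousLinearMap.flip_apply, map_smul]
      rfl
    rw [heq] at hs
    have hpt : (fun F : Finset ι => stmt8P tm b F (tm u x))
        = fun F => ∑ α ∈ F, ((tm.flip (b α)) ∘L adjoint (tm.flip (b α))) (tm u x) := by
      funext F; simp [stmt8P, ContinuousLinearMap.sum_apply]
    rw [hpt]
    exact hs
  have hspan : ∀ ξ' ∈ Submodule.span ℂ (Set.range fun p : H × K => tm p.1 p.2),
      Tendsto (fun F : Finset ι => stmt8P tm b F ξ') atTop (𝓝 ξ') := by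
    intro ξ' hξ'
    induction hξ' using Submodule.span_induction with
    | mem x hx => obtain ⟨p, rfl⟩ := hx; exact hgen p.1 p.2
    | zero => simpa only [map_zero] using (tendsto_const_nhds :
        Tendsto (fun _ : Finset ι => (0 : HK)) atTop (𝓝 0))
    | add x y hx hy ihx ihy => simpa only [map_add] using ihx.add ihy
    | smul c x hx ih => simpa only [map_smul] using ih.const_smul c
  classical
  haveI : Nonempty (Finset ι) := ⟨∅⟩
  refine Metric.tendsto_atTop.mpr fun ε hε => ?_
  obtain ⟨ξ', hmem, hd⟩ := Metric.mem_closure_iff.mp (htot ξ) (ε/3) (by linarith)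
  obtain ⟨F₀, hF₀⟩ := Metric.tendsto_atTop.mp (hspan ξ' hmem) (ε/3) (by linarith)
  refine ⟨F₀, fun F hF => ?_⟩
  have h1 : dist (stmt8P tm b F ξ) (stmt8P tm b F ξ') ≤ dist ξ ξ' := by
    rw [dist_eq_norm, dist_eq_norm, ← map_sub]
    exact stmt8P_norm_apply_le tm b htm F (ξ - ξ')
  calc dist (stmt8P tm b F ξ) ξ
      ≤ dist (stmt8P tm b F ξ) (stmt8P tm b F ξ')
        + dist (stmt8P tm b F ξ') ξ' + dist ξ' ξ := dist_triangle4 _ _ _ _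
    _ < ε/3 + ε/3 + ε/3 :=
        add_lt_add (add_lt_add (lt_of_le_of_lt h1 hd) (hF₀ F hF))
          (by rwa [dist_comm])
    _ = ε := by ring

lemma stmt8_adj_comp_P_tendsto
    (htm : ∀ (u v : H) (z w : K), ⟪tm u z, tm v w⟫ = ⟪u, v⟫ * ⟪z, w⟫)
    (x : K) :
    Tendsto (fun F : Finset ι => adjoint (tm.flip x) ∘L stmt8P tm b F) atTop
      (𝓝 (adjoint (tm.flip x))) := by
  have hEq : ∀ F : Finset ι, adjoint (tm.flip x) ∘L stmt8P tm b F
      = adjoint (tm.flip (∑ α ∈ F, (⟪b α, x⟫ : ℂ) • b α)) := by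
    intro F
    ext ξ
    apply ext_inner_right ℂ
    intro v
    rw [comp_apply, stmt8P_apply, map_sum, sum_inner, adjoint_inner_left]
    have hv : (tm.flip (∑ α ∈ F, (⟪b α, x⟫ : ℂ) • b α)) v
        = ∑ α ∈ F, (⟪b α, x⟫ : ℂ) • tm v (b α) := by
      rw [ContinuousLinearMap.flip_apply, map_sum]
      refine Finset.sum_congr rfl fun α _ => ?_
      rw [map_smul]
    rw [hv, inner_sum]
    refine Finset.sum_congr rfl fun α _ => ?_
    rw [stmt8_adj_flip_apply tm htm x (b α), inner_smul_left, inner_smul_right,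
      inner_conj_symm]
    congr 1
    have : tm v (b α) = (tm.flip (b α)) v := rfl
    rw [this, ← adjoint_inner_left]
  have hx : Tendsto (fun F : Finset ι => ∑ α ∈ F, (⟪b α, x⟫ : ℂ) • b α) atTop (𝓝 x) := by
    have := b.hasSum_repr x
    have heq : (fun α : ι => b.repr x α • b α) = fun α => (⟪b α, x⟫ : ℂ) • b α := by
      funext α; rw [b.repr_apply_apply]
    rw [heq] at this
    exact this
  rw [tendsto_iff_norm_sub_tendsto_zero]
  have hbound : ∀ F : Finset ι,
      ‖adjoint (tm.flip x) ∘L stmt8P tm b F - adjoint (tm.flip x)‖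
        ≤ ‖(∑ α ∈ F, (⟪b α, x⟫ : ℂ) • b α) - x‖ := by
    intro F
    rw [hEq F, ← map_sub (ContinuousLinearMap.adjoint), ← map_sub tm.flip]
    rw [LinearIsometryEquiv.norm_map]
    exact stmt8_flip_norm tm htm _
  refine squeeze_zero (fun F => norm_nonneg _) hbound ?_
  exact tendsto_iff_norm_sub_tendsto_zero.mp hx

lemma stmt8_row
    (htm : ∀ (u v : H) (z w : K), ⟪tm u z, tm v w⟫ = ⟪u, v⟫ * ⟪z, w⟫)
    (R : HK →L[ℂ] H)
    (hR : R ∈ closure ((Submodule.span ℂ {R' : HK →L[ℂ] H |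
        ∃ (a : H →L[ℂ] H) (w : K), R' = a ∘L adjoint (tm.flip w)} :
        Submodule ℂ (HK →L[ℂ] H)) : Set (HK →L[ℂ] H))) :
    Tendsto (fun F : Finset ι => R ∘L stmt8P tm b F) atTop (𝓝 R) := by
  have hspan : ∀ R' ∈ Submodule.span ℂ {R' : HK →L[ℂ] H |
      ∃ (a : H →L[ℂ] H) (w : K), R' = a ∘L adjoint (tm.flip w)},
      Tendsto (fun F : Finset ι => R' ∘L stmt8P tm b F) atTop (𝓝 R') := by
    intro R' hR'
    induction hR' using Submodule.span_induction with
    | mem x hx =>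
      obtain ⟨a, w, rfl⟩ := hx
      have h1 := stmt8_adj_comp_P_tendsto tm b htm w
      have h2 : Tendsto (fun F : Finset ι =>
          (ContinuousLinearMap.compL ℂ HK H H a) (adjoint (tm.flip w) ∘L stmt8P tm b F))
          atTop (𝓝 ((ContinuousLinearMap.compL ℂ HK H H a) (adjoint (tm.flip w)))) :=
        ((ContinuousLinearMap.compL ℂ HK H H a).continuous.tendsto _).comp h1
      simpa only [ContinuousLinearMap.compL_apply, ← ContinuousLinearMap.comp_assoc]
        using h2
    | zero => simpa only [zero_comp] using (tendsto_const_nhds :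
        Tendsto (fun _ : Finset ι => (0 : HK →L[ℂ] H)) atTop (𝓝 0))
    | add x y hx hy ihx ihy => simpa only [add_comp] using ihx.add ihy
    | smul c x hx ih => simpa only [smul_comp] using ih.const_smul c
  classical
  haveI : Nonempty (Finset ι) := ⟨∅⟩
  refine Metric.tendsto_atTop.mpr fun ε hε => ?_
  obtain ⟨R', hmem, hd⟩ := Metric.mem_closure_iff.mp hR (ε/3) (by linarith)
  obtain ⟨F₀, hF₀⟩ := Metric.tendsto_atTop.mp (hspan R' hmem) (ε/3) (by linarith)
  refine ⟨F₀, fun F hF => ?_⟩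
  have h1 : dist (R ∘L stmt8P tm b F) (R' ∘L stmt8P tm b F) ≤ dist R R' := by
    rw [dist_eq_norm, dist_eq_norm, ← sub_comp]
    calc ‖(R - R') ∘L stmt8P tm b F‖ ≤ ‖R - R'‖ * ‖stmt8P tm b F‖ :=
          opNorm_comp_le _ _
      _ ≤ ‖R - R'‖ * 1 :=
          mul_le_mul_of_nonneg_left (stmt8P_opNorm tm b htm F) (norm_nonneg _)
      _ = ‖R - R'‖ := mul_one _
  calc dist (R ∘L stmt8P tm b F) R
      ≤ dist (R ∘L stmt8P tm b F) (R' ∘L stmt8P tm b F)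
        + dist (R' ∘L stmt8P tm b F) R' + dist R' R := dist_triangle4 _ _ _ _
    _ < ε/3 + ε/3 + ε/3 :=
        add_lt_add (add_lt_add (lt_of_le_of_lt h1 hd) (hF₀ F hF))
          (by rwa [dist_comm])
    _ = ε := by ring

end Stmt8Aux



open Filter Topology ContinuousLinearMap

/-- Let `φ : A → B(H₂)` be a *-homomorphism on a C*-algebra
`A ⊆ B(H₁)`, `K` a Hilbert space, and `S, T ∈ A ⊗_M B(K)` with
`S ∈ R(A; K)` (every slice `E^z S` lies in the norm closure of the algebraic
row space `A ⊗ ⟨K|`).  Then `S T ∈ A ⊗_M B(K)` and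
`(φ ⊗_M id)(S) (φ ⊗_M id)(T) = (φ ⊗_M id)(S T)`, where the lifting is
characterised by its slices.  Tensor products `H₁ ⊗ K`, `H₂ ⊗ K` are
modelled by `H1K`, `H2K` via `tm₁`, `tm₂`. -/
theorem stmt8
    {H₁ H₂ K H1K H2K : Type*}
    [NormedAddCommGroup H₁] [InnerProductSpace ℂ H₁] [CompleteSpace H₁]
    [NormedAddCommGroup H₂] [InnerProductSpace ℂ H₂] [CompleteSpace H₂]
    [NormedAddCommGroup K] [InnerProductSpace ℂ K] [CompleteSpace K]
    [NormedAddCommGroup H1K] [InnerProductSpace ℂ H1K] [CompleteSpace H1K]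
    [NormedAddCommGroup H2K] [InnerProductSpace ℂ H2K] [CompleteSpace H2K]
    (tm₁ : H₁ →L[ℂ] K →L[ℂ] H1K)
    (htm₁ : ∀ (u v : H₁) (z w : K),
      (inner ℂ (tm₁ u z) (tm₁ v w) : ℂ) = (inner ℂ u v : ℂ) * (inner ℂ z w : ℂ))
    (htot₁ : Dense (Submodule.span ℂ
      (Set.range fun p : H₁ × K => tm₁ p.1 p.2) : Set H1K))
    (tm₂ : H₂ →L[ℂ] K →L[ℂ] H2K)
    (htm₂ : ∀ (u v : H₂) (z w : K),
      (inner ℂ (tm₂ u z) (tm₂ v w) : ℂ) = (inner ℂ u v : ℂ) * (inner ℂ z w : ℂ))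
    (htot₂ : Dense (Submodule.span ℂ
      (Set.range fun p : H₂ × K => tm₂ p.1 p.2) : Set H2K))
    (A : StarSubalgebra ℂ (H₁ →L[ℂ] H₁)) (hA : IsClosed (A : Set (H₁ →L[ℂ] H₁)))
    (φ : A →⋆ₐ[ℂ] (H₂ →L[ℂ] H₂))
    (S T : H1K →L[ℂ] H1K)
    (hS : ∀ z w : K,
      (ContinuousLinearMap.adjoint (tm₁.flip z)) ∘L S ∘L (tm₁.flip w) ∈ A)
    (hT : ∀ z w : K,
      (ContinuousLinearMap.adjoint (tm₁.flip z)) ∘L T ∘L (tm₁.flip w) ∈ A)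
    -- S belongs to the row space R(A; K)
    (hSrow : ∀ z : K,
      (ContinuousLinearMap.adjoint (tm₁.flip z)) ∘L S ∈
        closure (Submodule.span ℂ
          {R : H1K →L[ℂ] H₁ | ∃ a ∈ A, ∃ w : K,
            R = (a : H₁ →L[ℂ] H₁) ∘L (ContinuousLinearMap.adjoint (tm₁.flip w))} :
          Set (H1K →L[ℂ] H₁)))
    (φlift : (H1K →L[ℂ] H1K) → (H2K →L[ℂ] H2K))
    (hlift : ∀ (X : H1K →L[ℂ] H1K)
      (hX : ∀ z w : K,
        (ContinuousLinearMap.adjoint (tm₁.flip z)) ∘L X ∘L (tm₁.flip w) ∈ A),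
      ∀ z w : K,
        (ContinuousLinearMap.adjoint (tm₂.flip z)) ∘L (φlift X) ∘L (tm₂.flip w)
          = φ ⟨(ContinuousLinearMap.adjoint (tm₁.flip z)) ∘L X ∘L (tm₁.flip w),
              hX z w⟩) :
    (∀ z w : K,
        (ContinuousLinearMap.adjoint (tm₁.flip z)) ∘L (S ∘L T) ∘L (tm₁.flip w)
          ∈ A) ∧
      (φlift S) ∘L (φlift T) = φlift (S ∘L T) := by
  classical
  obtain ⟨W, b, -⟩ := exists_hilbertBasis ℂ K
  haveI : Nonempty (Finset W) := ⟨∅⟩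
  -- the elements of A given by the slices of S and T
  set aA : K → W → A := fun z α =>
    ⟨ContinuousLinearMap.adjoint (tm₁.flip z) ∘L S ∘L (tm₁.flip (b α)), hS z (b α)⟩
    with haA
  set bA : K → W → A := fun w α =>
    ⟨ContinuousLinearMap.adjoint (tm₁.flip (b α)) ∘L T ∘L (tm₁.flip w), hT (b α) w⟩
    with hbA
  -- key convergence of partial sums to the slice of S ∘L T
  have key1 : ∀ z w : K,
      Tendsto (fun F : Finset W => ∑ α ∈ F,
          ((aA z α * bA w α : A) : H₁ →L[ℂ] H₁)) atTop
        (𝓝 (ContinuousLinearMap.adjoint (tm₁.flip z) ∘L (S ∘L T) ∘L (tm₁.flip w))) := by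
    intro z w
    have hrow : ContinuousLinearMap.adjoint (tm₁.flip z) ∘L S ∈
        closure ((Submodule.span ℂ {R' : H1K →L[ℂ] H₁ |
          ∃ (a : H₁ →L[ℂ] H₁) (w' : K),
            R' = a ∘L ContinuousLinearMap.adjoint (tm₁.flip w')} :
          Submodule ℂ (H1K →L[ℂ] H₁)) : Set (H1K →L[ℂ] H₁)) := by
      refine closure_mono ?_ (hSrow z)
      refine SetLike.coe_subset_coe.mpr (Submodule.span_mono ?_)
      rintro R ⟨a, _, w', hw'⟩
      exact ⟨(a : H₁ →L[ℂ] H₁), w', hw'⟩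
    have h0 := stmt8_row tm₁ b htm₁ _ hrow
    have h1 : Tendsto (fun F : Finset W =>
        ((ContinuousLinearMap.adjoint (tm₁.flip z) ∘L S) ∘L stmt8P tm₁ b F)
          ∘L (T ∘L tm₁.flip w)) atTop
        (𝓝 ((ContinuousLinearMap.adjoint (tm₁.flip z) ∘L S) ∘L (T ∘L tm₁.flip w))) := by
      have hc : Continuous fun L : H1K →L[ℂ] H₁ => L ∘L (T ∘L tm₁.flip w) :=
        ((ContinuousLinearMap.compL ℂ H₁ H1K H₁).flip (T ∘L tm₁.flip w)).continuous
      exact (hc.tendsto _).comp h0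
    have hsum : ∀ F : Finset W,
        ((ContinuousLinearMap.adjoint (tm₁.flip z) ∘L S) ∘L stmt8P tm₁ b F)
          ∘L (T ∘L tm₁.flip w)
        = ∑ α ∈ F, ((aA z α * bA w α : A) : H₁ →L[ℂ] H₁) := by
      intro F
      ext u
      simp only [ContinuousLinearMap.coe_comp', Function.comp_apply, stmt8P_apply,
        map_sum, ContinuousLinearMap.sum_apply, haA, hbA, MulMemClass.coe_mul,
        ContinuousLinearMap.mul_apply, ContinuousLinearMap.flip_apply]
    have hassoc : (ContinuousLinearMap.adjoint (tm₁.flip z) ∘L S) ∘L (T ∘L tm₁.flip w)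
        = ContinuousLinearMap.adjoint (tm₁.flip z) ∘L (S ∘L T) ∘L (tm₁.flip w) := by
      ext u; simp [ContinuousLinearMap.coe_comp', Function.comp_apply]
    rw [← hassoc]
    exact h1.congr fun F => hsum F
  -- part 1
  have part1 : ∀ z w : K,
      (ContinuousLinearMap.adjoint (tm₁.flip z)) ∘L (S ∘L T) ∘L (tm₁.flip w) ∈ A := by
    intro z w
    refine hA.mem_of_tendsto (key1 z w) (Eventually.of_forall fun F => ?_)
    exact sum_mem fun α _ => (aA z α * bA w α).2
  refine ⟨part1, ?_⟩
  -- continuity of φ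
  haveI : IsClosed ((A : Set (H₁ →L[ℂ] H₁))) := hA
  have hφc : Continuous φ := by
    refine AddMonoidHomClass.continuous_of_bound φ 1 fun x => ?_
    simpa using NonUnitalStarAlgHom.norm_apply_le φ x
  -- convergence inside A and after φ
  have key2 : ∀ z w : K,
      Tendsto (fun F : Finset W => ∑ α ∈ F, φ (aA z α) * φ (bA w α)) atTop
        (𝓝 (φ ⟨ContinuousLinearMap.adjoint (tm₁.flip z) ∘L (S ∘L T) ∘L (tm₁.flip w),
          part1 z w⟩)) := by
    intro z w
    have hA' : Tendsto (fun F : Finset W => (∑ α ∈ F, (aA z α * bA w α) : A)) atTop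
        (𝓝 (⟨ContinuousLinearMap.adjoint (tm₁.flip z) ∘L (S ∘L T) ∘L (tm₁.flip w),
          part1 z w⟩ : A)) := by
      rw [Topology.IsEmbedding.subtypeVal.tendsto_nhds_iff]
      have : (Subtype.val ∘ fun F : Finset W => (∑ α ∈ F, (aA z α * bA w α) : A))
          = fun F : Finset W => ∑ α ∈ F, ((aA z α * bA w α : A) : H₁ →L[ℂ] H₁) := by
        funext F
        simp [AddSubmonoidClass.coe_finset_sum]
      rw [this]
      exact key1 z w
    have := (hφc.tendsto _).comp hA'
    refine this.congr fun F => ?_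
    simp [map_sum, map_mul]
  -- pointwise identity
  have main : ∀ (z w : K) (u : H₂) (v : H₂),
      (inner ℂ (tm₂ u z) ((φlift S) ((φlift T) (tm₂ v w))) : ℂ)
        = (inner ℂ (tm₂ u z) ((φlift (S ∘L T)) (tm₂ v w)) : ℂ) := by
    intro z w u v
    set ξ : H2K := ContinuousLinearMap.adjoint (φlift S) (tm₂ u z) with hξ
    set η : H2K := φlift T (tm₂ v w) with hη
    have hten : Tendsto (fun F : Finset W => (inner ℂ ξ (stmt8P tm₂ b F η) : ℂ)) atTop
        (𝓝 (inner ℂ ξ η : ℂ)) :=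
      tendsto_const_nhds.inner (stmt8P_tendsto tm₂ b htm₂ htot₂ η)
    have heqF : ∀ F : Finset W, (inner ℂ ξ (stmt8P tm₂ b F η) : ℂ)
        = inner ℂ u ((∑ α ∈ F, φ (aA z α) * φ (bA w α)) v) := by
      intro F
      rw [stmt8P_apply, inner_sum, ContinuousLinearMap.sum_apply, inner_sum]
      refine Finset.sum_congr rfl fun α _ => ?_
      have hc2 : ContinuousLinearMap.adjoint (tm₂.flip (b α)) η = φ (bA w α) v := by
        have := congrArg (fun (L : H₂ →L[ℂ] H₂) => L v) (hlift T hT (b α) w)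
        simpa [hbA, hη, ContinuousLinearMap.coe_comp', Function.comp_apply]
          using this
      have hstep1 : (inner ℂ ξ (tm₂ (ContinuousLinearMap.adjoint (tm₂.flip (b α)) η) (b α)) : ℂ)
          = inner ℂ (tm₂ u z) ((φlift S) ((tm₂.flip (b α)) (ContinuousLinearMap.adjoint (tm₂.flip (b α)) η))) := by
        rw [hξ, adjoint_inner_left]
        simp only [ContinuousLinearMap.flip_apply]
      have hstep2 : (inner ℂ (tm₂ u z) ((φlift S) ((tm₂.flip (b α)) (ContinuousLinearMap.adjoint (tm₂.flip (b α)) η))) : ℂ)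
          = inner ℂ u ((ContinuousLinearMap.adjoint (tm₂.flip z) ∘L (φlift S) ∘L (tm₂.flip (b α)))
              (ContinuousLinearMap.adjoint (tm₂.flip (b α)) η)) := by
        have h1 : tm₂ u z = (tm₂.flip z) u := rfl
        rw [h1, ← adjoint_inner_right]
        simp [ContinuousLinearMap.coe_comp', Function.comp_apply]
      rw [hstep1, hstep2, hlift S hS z (b α), hc2]
      simp [haA, ContinuousLinearMap.mul_apply]
    have hten2 : Tendsto (fun F : Finset W =>
        (inner ℂ u ((∑ α ∈ F, φ (aA z α) * φ (bA w α)) v) : ℂ)) atTop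
        (𝓝 (inner ℂ u ((φ ⟨ContinuousLinearMap.adjoint (tm₁.flip z) ∘L (S ∘L T) ∘L (tm₁.flip w),
          part1 z w⟩) v))) := by
      have happ : Continuous fun M : H₂ →L[ℂ] H₂ => M v :=
        (ContinuousLinearMap.apply ℂ H₂ v).continuous
      exact tendsto_const_nhds.inner ((happ.tendsto _).comp (key2 z w))
    have hlim : (inner ℂ ξ η : ℂ)
        = inner ℂ u ((φ ⟨ContinuousLinearMap.adjoint (tm₁.flip z) ∘L (S ∘L T) ∘L (tm₁.flip w),
          part1 z w⟩) v) :=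
      tendsto_nhds_unique (hten.congr fun F => heqF F) hten2
    have hlhs : (inner ℂ ξ η : ℂ) = inner ℂ (tm₂ u z) ((φlift S) ((φlift T) (tm₂ v w))) := by
      rw [hξ, hη, adjoint_inner_left]
    have hrhs : (inner ℂ u ((φ ⟨ContinuousLinearMap.adjoint (tm₁.flip z) ∘L (S ∘L T) ∘L (tm₁.flip w),
          part1 z w⟩) v) : ℂ) = inner ℂ (tm₂ u z) ((φlift (S ∘L T)) (tm₂ v w)) := by
      rw [← hlift (S ∘L T) part1 z w]
      have h1 : tm₂ u z = (tm₂.flip z) u := rfl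
      rw [h1, ← adjoint_inner_right]
      simp [ContinuousLinearMap.coe_comp', Function.comp_apply]
    rw [← hlhs, hlim, hrhs]
  -- conclude operator equality from density
  refine ContinuousLinearMap.ext_on htot₂ ?_
  rintro x ⟨⟨v, w⟩, rfl⟩
  refine htot₂.eq_of_inner_right ℂ fun g hg => ?_
  simp only [ContinuousLinearMap.coe_comp', Function.comp_apply]
  induction hg using Submodule.span_induction with
  | mem x hx =>
    obtain ⟨⟨u, z⟩, rfl⟩ := hx
    exact main z w u v
  | zero => simp
  | add a b' ha hb iha ihb => simp only [inner_add_left, iha, ihb]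
  | smul c x hx ih => simp only [inner_smul_left, ih]
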